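/- For fixed ω > 0, the function n ↦ (n/(n−1))·sinh(πω(n−1)/n) is monotone increasing in n on (1, ∞), and for fixed ω < 0 it is monotone decreasing in n. -/

import Mathlib

open Real in
lemma sinh_le_mul_cosh {x : ℝ} (hx : 0 ≤ x) : Real.sinh x ≤ x * Real.cosh x := by
  have hd : ∀ y : ℝ, HasDerivAt (fun t => t * Real.cosh t - Real.sinh t)
      (y * Real.sinh y) y := by
    intro y
    have h := ((hasDerivAt_id y).mul (Real.hasDerivAt_cosh y)).sub (Real.hasDerivAt_sinh y)
    exact h.congr_deriv (by simp only [id_eq]; ring)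
  have hm : MonotoneOn (fun t => t * Real.cosh t - Real.sinh t) (Set.Ici 0) := by
    apply monotoneOn_of_deriv_nonneg (convex_Ici 0)
    · exact Continuous.continuousOn (by continuity)
    · intro y _; exact (hd y).differentiableAt.differentiableWithinAt
    · intro y hy
      rw [interior_Ici] at hy
      rw [(hd y).deriv]
      exact mul_nonneg (le_of_lt hy) (le_of_lt (Real.sinh_pos_iff.mpr hy))
  have h0 := hm (Set.mem_Ici.mpr (le_refl 0)) hx hx
  simp at h0
  linarith

open Real in
lemma sinh_div_monotone : MonotoneOn (fun x => Real.sinh x / x) (Set.Ioi (0:ℝ)) := by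
  apply monotoneOn_of_deriv_nonneg (convex_Ioi 0)
  · exact ContinuousOn.div Real.continuous_sinh.continuousOn continuousOn_id
      (fun x hx => ne_of_gt hx)
  · intro x hx
    rw [interior_Ioi] at hx
    have hdd : HasDerivAt (fun t : ℝ => Real.sinh t / t)
        ((Real.cosh x * x - Real.sinh x * 1) / x ^ 2) x :=
      (Real.hasDerivAt_sinh x).div (hasDerivAt_id x) (ne_of_gt hx)
    exact hdd.differentiableAt.differentiableWithinAt
  · intro x hx
    rw [interior_Ioi] at hx
    have hdd : HasDerivAt (fun t : ℝ => Real.sinh t / t)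
        ((Real.cosh x * x - Real.sinh x * 1) / x ^ 2) x :=
      (Real.hasDerivAt_sinh x).div (hasDerivAt_id x) (ne_of_gt hx)
    rw [hdd.deriv]
    have := sinh_le_mul_cosh (le_of_lt hx)
    have hx2 : (0:ℝ) < x ^ 2 := pow_pos hx 2
    apply div_nonneg _ (le_of_lt hx2)
    nlinarith

open Real in
lemma f_mono_pos {ω : ℝ} (hω : 0 < ω) :
    MonotoneOn (fun n : ℝ => n / (n - 1) * Real.sinh (π * ω * (n - 1) / n))
      (Set.Ioi (1 : ℝ)) := by
  intro a ha b hb hab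
  simp only
  rw [Set.mem_Ioi] at ha hb
  have ha0 : (0:ℝ) < a := by linarith
  have hb0 : (0:ℝ) < b := by linarith
  have ha1 : (0:ℝ) < a - 1 := by linarith
  have hb1 : (0:ℝ) < b - 1 := by linarith
  have hc : (0:ℝ) < π * ω := mul_pos Real.pi_pos hω
  set x := π * ω * (a - 1) / a with hxdef
  set y := π * ω * (b - 1) / b with hydef
  have hx : 0 < x := by rw [hxdef]; exact div_pos (mul_pos hc ha1) ha0
  have hy : 0 < y := by rw [hydef]; exact div_pos (mul_pos hc hb1) hb0
  have hxy : x ≤ y := by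
    rw [hxdef, hydef, div_le_div_iff₀ ha0 hb0]
    nlinarith
  have key := sinh_div_monotone (Set.mem_Ioi.mpr hx) (Set.mem_Ioi.mpr hy) hxy
  have ea : a / (a - 1) * Real.sinh x = π * ω * (Real.sinh x / x) := by
    rw [hxdef]; field_simp
  have eb : b / (b - 1) * Real.sinh y = π * ω * (Real.sinh y / y) := by
    rw [hydef]; field_simp
  rw [ea, eb]
  exact mul_le_mul_of_nonneg_left key (le_of_lt hc)

open Real in
theorem f_monotone_in_n (ω : ℝ) :
    (0 < ω → MonotoneOn (fun n : ℝ => n / (n - 1) * Real.sinh (π * ω * (n - 1) / n))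
      (Set.Ioi (1 : ℝ))) ∧
    (ω < 0 → AntitoneOn (fun n : ℝ => n / (n - 1) * Real.sinh (π * ω * (n - 1) / n))
      (Set.Ioi (1 : ℝ))) := by
  constructor
  · exact fun hω => f_mono_pos hω
  · intro hω a ha b hb hab
    have h := f_mono_pos (ω := -ω) (by linarith) ha hb hab
    simp only at h ⊢
    have e : ∀ n : ℝ, π * -ω * (n - 1) / n = -(π * ω * (n - 1) / n) := by
      intro n; ring
    rw [e a, e b, Real.sinh_neg, Real.sinh_neg] at h
    nlinarith [h]
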